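/- Let X be a topological space and let 𝒪'' ≪ 𝒪' ≪ 𝒪 be a chain of super-refinements of open covers of X. Then every (𝒪'',𝒪')-sibling map f: X → X induces a well-defined chain map f_*: 𝒞_*(X,𝒪'') → 𝒞_*(X,𝒪), given on generators by [x_0,…,x_n] ↦ [f(x_0),…,f(x_n)]; in particular, if [x_0,…,x_n] is 𝒪''-tiny then [f(x_0),…,f(x_n)] is 𝒪-tiny. Moreover, f_* is chain-homotopic to the standard inclusion 𝒞_*(X,𝒪'') ⊆ 𝒞_*(X,𝒪), via a chain homotopy taking values in 𝒞_*(X,𝒪). -/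

import Mathlib

/-- Discrete chains with `m` vertices: the free `ℤ`-module on ordered `m`-tuples of points. -/
abbrev DChain (α : Type*) (m : ℕ) := (Fin m → α) →₀ ℤ

/-- The `i`-th face operator on discrete chains, deleting the `i`-th vertex. -/
noncomputable def dface {α : Type*} {m : ℕ} (i : Fin (m + 1)) :
    DChain α (m + 1) →ₗ[ℤ] DChain α m :=
  Finsupp.lmapDomain ℤ ℤ (fun σ => σ ∘ i.succAbove)

/-- The simplicial boundary operator on discrete chains:
`∂[x₀,…,xₙ] = ∑ i, (-1)^i [x₀,…,x̂ᵢ,…,xₙ]`. -/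
noncomputable def dbd {α : Type*} {m : ℕ} : DChain α (m + 1) →ₗ[ℤ] DChain α m :=
  ∑ i : Fin (m + 1), ((-1 : ℤ) ^ (i : ℕ)) • dface i

/-- The chain map induced by a map on vertices. -/
noncomputable def vmap {α β : Type*} (f : α → β) {m : ℕ} : DChain α m →ₗ[ℤ] DChain β m :=
  Finsupp.lmapDomain ℤ ℤ (fun σ => f ∘ σ)

/-- The support of a discrete chain: the set of vertices appearing in its
cancellation-free expression. -/
def chainSupp {α : Type*} {m : ℕ} (c : DChain α m) : Set α :=
  ⋃ σ ∈ c.support, Set.range σ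

/-- An open cover of a topological space. -/
def IsOpenCover {X : Type*} [TopologicalSpace X] (O : Set (Set X)) : Prop :=
  (∀ U ∈ O, IsOpen U) ∧ ⋃₀ O = Set.univ

/-- `O'` refines `O`: every element of `O'` is contained in some element of `O`. -/
def Refines {X : Type*} (O' O : Set (Set X)) : Prop :=
  ∀ U ∈ O', ∃ V ∈ O, U ⊆ V

/-- `O'` is a super-refinement of `O` (written `O' ≪ O`) if every point `x` has a *parent*:
an element of `O` containing every member of `O'` that contains `x`. -/
def SuperRefines {X : Type*} (O' O : Set (Set X)) : Prop :=
  ∀ x : X, ∃ U ∈ O, ∀ V ∈ O', x ∈ V → V ⊆ U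

/-- A subset is `O`-tiny if it is contained in a single element of `O`. -/
def Tiny {X : Type*} (O : Set (Set X)) (A : Set X) : Prop :=
  ∃ U ∈ O, A ⊆ U

/-- A discrete chain is `O`-fine if each of its simplices is `O`-tiny. -/
def FineChain {X : Type*} (O : Set (Set X)) {m : ℕ} (c : DChain X m) : Prop :=
  ∀ σ ∈ c.support, Tiny O (Set.range σ)

/-- A chain of tuples of sets is a nerve chain of the cover `O` if each of its simplices is a
tuple of elements of `O` with nonempty intersection. -/
def NerveChain {X : Type*} (O : Set (Set X)) {m : ℕ} (c : DChain (Set X) m) : Prop :=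
  ∀ τ ∈ c.support, (∀ i, τ i ∈ O) ∧ (⋂ i, τ i).Nonempty

open Finsupp

lemma dface_single {α : Type*} {m : ℕ} (i : Fin (m+1)) (σ : Fin (m+1) → α) (b : ℤ) :
    dface i (single σ b) = single (σ ∘ i.succAbove) b := by
  simp [dface, lmapDomain_apply, mapDomain_single]

lemma dbd_single {α : Type*} {m : ℕ} (σ : Fin (m+1) → α) (b : ℤ) :
    dbd (single σ b) =
      ∑ i : Fin (m+1), ((-1 : ℤ) ^ (i : ℕ)) • single (σ ∘ i.succAbove) b := by
  simp [dbd, LinearMap.sum_apply, dface_single]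

lemma vmap_single {α β : Type*} (f : α → β) {m : ℕ} (σ : Fin m → α) (b : ℤ) :
    vmap f (single σ b) = single (f ∘ σ) b := by
  simp [vmap, lmapDomain_apply, mapDomain_single]

noncomputable def coneMap {α : Type*} (p : α) {m : ℕ} :
    DChain α m →ₗ[ℤ] DChain α (m + 1) :=
  Finsupp.lmapDomain ℤ ℤ (fun σ => Fin.cons p σ)

lemma coneMap_single {α : Type*} (p : α) {m : ℕ} (σ : Fin m → α) (b : ℤ) :
    coneMap p (single σ b) = single (Fin.cons p σ) b := by
  simp [coneMap, lmapDomain_apply, mapDomain_single]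

lemma cons_comp_succAbove_zero {α : Type*} {m : ℕ} (p : α) (σ : Fin (m+1) → α) :
    (Fin.cons p σ : Fin (m+2) → α) ∘ (0 : Fin (m+2)).succAbove = σ := by
  funext j; simp [Fin.zero_succAbove]

lemma cons_comp_succAbove_succ {α : Type*} {m : ℕ} (p : α) (σ : Fin (m+1) → α)
    (j : Fin (m+1)) :
    (Fin.cons p σ : Fin (m+2) → α) ∘ (j.succ).succAbove = Fin.cons p (σ ∘ j.succAbove) := by
  funext i
  refine Fin.cases ?_ (fun i' => ?_) i
  · simp [Fin.succ_succAbove_zero]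
  · simp [Fin.succ_succAbove_succ]

lemma dbd_coneMap {α : Type*} (p : α) {m : ℕ} (c : DChain α (m+1)) :
    dbd (coneMap p c) = c - coneMap p (dbd c) := by
  induction c using Finsupp.induction_linear with
  | zero => simp
  | add f g hf hg => simp only [map_add, hf, hg]; abel
  | single σ b =>
    rw [coneMap_single, dbd_single, dbd_single, Fin.sum_univ_succ]
    simp only [cons_comp_succAbove_zero, cons_comp_succAbove_succ, Fin.val_zero, pow_zero,
      one_smul, Fin.val_succ, pow_succ, mul_neg_one, neg_smul, map_sum, map_smul,
      coneMap_single, Finset.sum_neg_distrib]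
    abel

noncomputable def Hval {α : Type*} (f : α → α) : (m : ℕ) → (Fin (m+1) → α) → DChain α (m+2)
  | 0, σ => coneMap (σ 0) (single (f ∘ σ) 1)
  | m+1, σ => coneMap (σ 0) (single (f ∘ σ) 1 - Hval f m (Fin.tail σ))

noncomputable def Hmap {α : Type*} (f : α → α) (m : ℕ) :
    DChain α (m+1) →ₗ[ℤ] DChain α (m+2) :=
  Finsupp.lsum ℤ fun σ => LinearMap.toSpanSingleton ℤ _ (Hval f m σ)

lemma Hmap_single {α : Type*} (f : α → α) (m : ℕ) (σ : Fin (m+1) → α) (b : ℤ) :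
    Hmap f m (single σ b) = b • Hval f m σ := by
  simp [Hmap, Finsupp.lsum_single, LinearMap.toSpanSingleton_apply]

noncomputable def Kmap {α : Type*} (f : α → α) : (m : ℕ) → DChain α m →ₗ[ℤ] DChain α (m+1)
  | 0 => 0
  | m+1 => Hmap f m

lemma Hval_eq {α : Type*} (f : α → α) (m : ℕ) (σ : Fin (m+1) → α) :
    Hval f m σ = coneMap (σ 0) (single (f ∘ σ) 1 - Kmap f m (single (σ ∘ Fin.succ) 1)) := by
  cases m with
  | zero => simp [Hval, Kmap]
  | succ m => simp [Hval, Kmap, Hmap_single]; rfl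

lemma homotopy_identity {α : Type*} (f : α → α) :
    ∀ (m : ℕ) (σ : Fin (m+1) → α),
      dbd (Hval f m σ) + Kmap f m (dbd (single σ 1)) = single (f ∘ σ) 1 - single σ 1 := by
  intro m
  induction m with
  | zero =>
    intro σ
    have hσ : (Fin.cons (σ 0) ((f ∘ σ) ∘ (0 : Fin 1).succAbove) : Fin 1 → α) = σ := by
      funext i
      refine Fin.cases rfl (fun i' => i'.elim0) i
    show dbd (Hval f 0 σ) + (0 : DChain α 0 →ₗ[ℤ] DChain α 1) (dbd (single σ 1)) = _
    rw [LinearMap.zero_apply, add_zero]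
    show dbd (coneMap (σ 0) (single (f ∘ σ) 1)) = _
    rw [dbd_coneMap, dbd_single, Fin.sum_univ_one, Fin.val_zero, pow_zero, one_smul,
      coneMap_single, hσ]
  | succ m ih =>
    intro σ
    have ihτ : dbd (Hval f m (Fin.tail σ)) =
        single (f ∘ Fin.tail σ) 1 - single (Fin.tail σ) 1
          - Kmap f m (dbd (single (Fin.tail σ) 1)) := by
      rw [eq_sub_iff_add_eq]; exact ih (Fin.tail σ)
    have hfτ : (f ∘ σ) ∘ (0 : Fin (m+2)).succAbove = f ∘ Fin.tail σ := by
      funext i; simp [Fin.zero_succAbove, Fin.tail]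
    have hτ0 : σ ∘ (0 : Fin (m+2)).succAbove = Fin.tail σ := by
      funext i; simp [Fin.zero_succAbove, Fin.tail]
    have hhead : ∀ j : Fin (m+1), (σ ∘ (j.succ).succAbove) 0 = σ 0 := by
      intro j; simp [Fin.succ_succAbove_zero]
    have htail : ∀ j : Fin (m+1),
        (σ ∘ (j.succ).succAbove) ∘ Fin.succ = Fin.tail σ ∘ j.succAbove := by
      intro j; funext i
      simp [Function.comp, Fin.succ_succAbove_succ, Fin.tail]
    -- expand B := Hmap f m (dbd (single σ 1))
    have hB : Hmap f m (dbd (single σ 1)) = Hval f m (Fin.tail σ)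
        + ∑ j : Fin (m+1), ((-1 : ℤ) ^ ((j : ℕ) + 1)) •
            (coneMap (σ 0) (single ((f ∘ σ) ∘ (j.succ).succAbove) 1)
              - coneMap (σ 0) (Kmap f m (single (Fin.tail σ ∘ j.succAbove) 1))) := by
      rw [dbd_single, map_sum, Fin.sum_univ_succ]
      congr 1
      · rw [map_smul, Hmap_single, hτ0]
        simp
      · refine Finset.sum_congr rfl fun j _ => ?_
        rw [map_smul, Hmap_single, one_smul, Hval_eq f m (σ ∘ (j.succ).succAbove),
          hhead j, htail j, map_sub, Fin.val_succ]
        rfl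
    -- expand A := coneMap p (dbd (single (f∘σ) 1))
    have hA : coneMap (σ 0) (dbd (single (f ∘ σ) 1)) =
        coneMap (σ 0) (single (f ∘ Fin.tail σ) 1)
        + ∑ j : Fin (m+1), ((-1 : ℤ) ^ ((j : ℕ) + 1)) •
            coneMap (σ 0) (single ((f ∘ σ) ∘ (j.succ).succAbove) 1) := by
      rw [dbd_single, Fin.sum_univ_succ, map_add, map_sum]
      simp only [map_smul, Fin.val_zero, pow_zero, one_smul, Fin.val_succ, hfτ]
    -- expand C := coneMap p (Kmap f m (dbd (single τ 1)))
    have hC : coneMap (σ 0) (Kmap f m (dbd (single (Fin.tail σ) 1))) =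
        ∑ j : Fin (m+1), ((-1 : ℤ) ^ (j : ℕ)) •
          coneMap (σ 0) (Kmap f m (single (Fin.tail σ ∘ j.succAbove) 1)) := by
      rw [dbd_single, map_sum, map_sum]
      simp only [map_smul]
    have hS : coneMap (σ 0) (single (Fin.tail σ) 1) = single σ 1 := by
      rw [coneMap_single, Fin.cons_self_tail]
    show dbd (coneMap (σ 0) (single (f ∘ σ) 1 - Hval f m (Fin.tail σ)))
        + Hmap f m (dbd (single σ 1)) = _
    rw [dbd_coneMap, map_sub dbd, ihτ, hB]
    simp only [map_sub, hA, hC, hS]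
    simp only [pow_succ, mul_neg_one, neg_smul, smul_sub, Finset.sum_sub_distrib,
      Finset.sum_neg_distrib]
    abel

lemma dbd_vmap {α β : Type*} (f : α → β) {m : ℕ} (c : DChain α (m+1)) :
    dbd (vmap f c) = vmap f (dbd c) := by
  induction c using Finsupp.induction_linear with
  | zero => simp
  | add a b ha hb => simp [ha, hb]
  | single σ b =>
    rw [vmap_single, dbd_single, dbd_single, map_sum]
    refine Finset.sum_congr rfl fun i _ => ?_
    rw [map_smul, vmap_single]
    rfl

lemma Hval_support {α : Type*} (f : α → α) :
    ∀ (m : ℕ) (σ : Fin (m+1) → α), ∀ τ ∈ (Hval f m σ).support,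
      Set.range τ ⊆ Set.range σ ∪ Set.range (f ∘ σ) := by
  classical
  intro m
  induction m with
  | zero =>
    intro σ τ hτ
    rw [show Hval f 0 σ = single (Fin.cons (σ 0) (f ∘ σ)) 1 from coneMap_single _ _ _] at hτ
    have := Finsupp.support_single_subset hτ
    rw [Finset.mem_singleton] at this
    subst this
    rw [Fin.range_cons]
    refine Set.insert_subset (Or.inl ⟨0, rfl⟩) (Set.subset_union_right)
  | succ m ih =>
    intro σ τ hτ
    have h1 : τ ∈ (Finsupp.mapDomain (fun g => (Fin.cons (σ 0) g : Fin (m+3) → α))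
        (single (f ∘ σ) 1 - Hval f m (Fin.tail σ))).support := hτ
    obtain ⟨τ', hτ', rfl⟩ := Finset.mem_image.mp (Finsupp.mapDomain_support h1)
    rw [Fin.range_cons]
    have hτ'' := Finsupp.support_sub hτ'
    rw [Finset.mem_union] at hτ''
    refine Set.insert_subset (Or.inl ⟨0, rfl⟩) ?_
    rcases hτ'' with h | h
    · have := Finsupp.support_single_subset h
      rw [Finset.mem_singleton] at this
      subst this
      exact Set.subset_union_right
    · refine (ih (Fin.tail σ) τ' h).trans (Set.union_subset_union ?_ ?_)
      · exact Set.range_comp_subset_range Fin.succ σ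
      · exact Set.range_comp_subset_range Fin.succ (f ∘ σ)

lemma hom_deg0 {α : Type*} (f : α → α) (c : DChain α 1) :
    dbd (Hmap f 0 c) = vmap f c - c := by
  have h : (dbd ∘ₗ Hmap f 0) = vmap f - LinearMap.id := by
    refine Finsupp.lhom_ext' fun σ => LinearMap.ext_ring ?_
    have h0 := homotopy_identity f 0 σ
    rw [show Kmap f 0 = (0 : DChain α 0 →ₗ[ℤ] DChain α 1) from rfl,
      LinearMap.zero_apply, add_zero] at h0
    simpa [Finsupp.lsingle_apply, Hmap_single, vmap_single] using h0
  simpa using LinearMap.congr_fun h c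

lemma hom_degS {α : Type*} (f : α → α) (m : ℕ) (c : DChain α (m+2)) :
    dbd (Hmap f (m+1) c) + Hmap f m (dbd c) = vmap f c - c := by
  have h : (dbd ∘ₗ Hmap f (m+1)) + (Hmap f m ∘ₗ dbd) = vmap f - LinearMap.id := by
    refine Finsupp.lhom_ext' fun σ => LinearMap.ext_ring ?_
    have h0 := homotopy_identity f (m+1) σ
    rw [show Kmap f (m+1) = Hmap f m from rfl] at h0
    simpa [Finsupp.lsingle_apply, Hmap_single, vmap_single] using h0
  simpa using LinearMap.congr_fun h c


/-- Let `O'' ≪ O' ≪ O` be a chain of super-refinements of open covers of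
`X`.  Every `(O'',O')`-sibling map `f : X → X` (the composition of an `(O'',O')`-parent map
`X → O'` and a child map `O' → X`) induces a well-defined chain map
`f_* : 𝒞_*(X,O'') → 𝒞_*(X,O)`, `[x₀,…,xₙ] ↦ [f x₀,…,f xₙ]`: `O''`-tiny simplices are sent
to `O`-tiny simplices, and the map commutes with the boundary.  Moreover `f_*` is
chain-homotopic to the standard inclusion, via a chain homotopy with values in
`𝒞_*(X,O)`. -/
theorem siblingMap_chainMap {X : Type*} [TopologicalSpace X] (O'' O' O : Set (Set X))
    (hO'' : IsOpenCover O'') (hO' : IsOpenCover O') (hO : IsOpenCover O)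
    (h2 : SuperRefines O'' O') (h1 : SuperRefines O' O)
    (f : X → X)
    (hf : ∃ (P : X → Set X) (ch : Set X → X),
      (∀ x : X, P x ∈ O' ∧ ∀ V ∈ O'', x ∈ V → V ⊆ P x) ∧
      (∀ U ∈ O', ch U ∈ U) ∧ f = fun x => ch (P x)) :
    (∀ (m : ℕ) (σ : Fin (m + 1) → X), Tiny O'' (Set.range σ) →
      Tiny O (Set.range (fun j => f (σ j)))) ∧
    (∀ (m : ℕ) (c : DChain X (m + 1)), FineChain O'' c → FineChain O (vmap f c)) ∧
    (∀ (m : ℕ) (c : DChain X (m + 2)), dbd (vmap f c) = vmap f (dbd c)) ∧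
    (∃ H : ∀ m : ℕ, DChain X (m + 1) →ₗ[ℤ] DChain X (m + 2),
      (∀ (m : ℕ) (c : DChain X (m + 1)), FineChain O'' c → FineChain O (H m c)) ∧
      (∀ c : DChain X 1, FineChain O'' c →
        dbd (H 0 c) = vmap f c - c) ∧
      (∀ (m : ℕ) (c : DChain X (m + 2)), FineChain O'' c →
        dbd (H (m + 1) c) + H m (dbd c) = vmap f c - c)) := by
  classical
  obtain ⟨P, ch, hP, hch, hfe⟩ := hf
  have key : ∀ (n : ℕ) (σ : Fin n → X), Tiny O'' (Set.range σ) →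
      ∃ U ∈ O, Set.range σ ∪ Set.range (f ∘ σ) ⊆ U := by
    intro n σ h
    obtain ⟨W, hW, hsub⟩ := h
    rcases n with _ | n
    · obtain ⟨U, hU, -⟩ := h1 (ch W)
      exact ⟨U, hU, by rintro x (⟨j, rfl⟩ | ⟨j, rfl⟩) <;> exact j.elim0⟩
    obtain ⟨U, hU, hmax⟩ := h1 (σ 0)
    have hPj : ∀ j : Fin (n+1), σ j ∈ P (σ j) ∧ P (σ j) ⊆ U := by
      intro j
      have hWsub : W ⊆ P (σ j) := (hP (σ j)).2 W hW (hsub ⟨j, rfl⟩)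
      exact ⟨hWsub (hsub ⟨j, rfl⟩),
        hmax _ (hP (σ j)).1 (hWsub (hsub ⟨0, rfl⟩))⟩
    refine ⟨U, hU, ?_⟩
    rintro x (⟨j, rfl⟩ | ⟨j, rfl⟩)
    · exact (hPj j).2 (hPj j).1
    · rw [hfe]
      exact (hPj j).2 (hch _ (hP (σ j)).1)
  have part1 : ∀ (m : ℕ) (σ : Fin (m + 1) → X), Tiny O'' (Set.range σ) →
      Tiny O (Set.range (fun j => f (σ j))) := by
    intro m σ h
    obtain ⟨U, hU, hsub⟩ := key (m+1) σ h
    exact ⟨U, hU, fun x hx => hsub (Or.inr hx)⟩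
  refine ⟨part1, ?_, fun m c => dbd_vmap f c, ?_⟩
  · intro m c hc τ hτ
    have h' : τ ∈ (Finsupp.mapDomain (fun σ => f ∘ σ) c).support := hτ
    obtain ⟨σ, hσ, rfl⟩ := Finset.mem_image.mp (Finsupp.mapDomain_support h')
    exact part1 m σ (hc σ hσ)
  · refine ⟨Hmap f, ?_, fun c _ => hom_deg0 f c, fun m c _ => hom_degS f m c⟩
    intro m c hc τ hτ
    rw [show Hmap f m c = c.sum fun σ b => b • Hval f m σ from Finsupp.lsum_apply ℤ _ c] at hτ
    obtain ⟨σ, hσ, hmem⟩ := Finset.mem_biUnion.mp (Finsupp.support_sum hτ)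
    have hτ' : τ ∈ (Hval f m σ).support := Finsupp.support_smul hmem
    obtain ⟨U, hU, hsub⟩ := key (m+1) σ (hc σ hσ)
    exact ⟨U, hU, (Hval_support f m σ τ hτ').trans hsub⟩
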